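/- Let T be a tree linearly embedded in ℝⁿ and define Φ_T(x) = ∏_edges ψ(‖x − y_i‖) / ∏_vertices ψ(‖x − v_j‖)^(val(v_j)−1), where y_i is the point of edge E_i closest to x (and Φ_T(x) := 0 at vertices). Then 0 ≤ Φ_T(x) ≤ 1 for all x, Φ_T(x) = 0 if and only if x ∈ T, and Φ_T(x) = 1 if and only if dist(x, T) ≥ 3/2. -/

import Mathlib

open Finset Metric

/-- A tree linearly embedded in `ℝⁿ`: finitely many vertices with distinct
positions, an edge set making the vertex set a combinatorial tree, such that the
closed segments realizing the edges meet only at common endpoints and contain no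
other vertices. -/
structure EmbTree (n : ℕ) where
  V : Type
  [fV : Fintype V]
  [dV : DecidableEq V]
  pos : V → EuclideanSpace ℝ (Fin n)
  edges : Finset (Sym2 V)
  nodiag : ∀ e ∈ edges, ¬ e.IsDiag
  conn : ∀ u v : V, Relation.ReflTransGen (fun a b => s(a, b) ∈ edges) u v
  treecard : edges.card + 1 = Fintype.card V
  posInj : Function.Injective pos
  seg_inter : ∀ a b c d : V, s(a, b) ∈ edges → s(c, d) ∈ edges → s(a, b) ≠ s(c, d) →
      ∀ x, x ∈ segment ℝ (pos a) (pos b) → x ∈ segment ℝ (pos c) (pos d) →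
        ∃ v : V, pos v = x ∧ (v = a ∨ v = b) ∧ (v = c ∨ v = d)
  vertex_inter : ∀ (v a b : V), s(a, b) ∈ edges →
      pos v ∈ segment ℝ (pos a) (pos b) → v = a ∨ v = b

attribute [instance] EmbTree.fV EmbTree.dV

/-- The segment realizing an unordered pair of vertices. -/
noncomputable def segPos {n : ℕ} {V : Type*} (pos : V → EuclideanSpace ℝ (Fin n))
    (e : Sym2 V) : Set (EuclideanSpace ℝ (Fin n)) :=
  Sym2.lift ⟨fun a b => segment ℝ (pos a) (pos b), fun a b => segment_symm ℝ (pos a) (pos b)⟩ e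

namespace EmbTree

variable {n : ℕ} (T : EmbTree n)

/-- The segment realizing an edge. -/
noncomputable def segOf (e : Sym2 T.V) : Set (EuclideanSpace ℝ (Fin n)) :=
  segPos T.pos e

/-- The geometric realization of the tree: the union of its edge segments. -/
noncomputable def carrier : Set (EuclideanSpace ℝ (Fin n)) :=
  ⋃ e ∈ T.edges, T.segOf e

/-- The valence of a vertex. -/
def deg (v : T.V) : ℕ := (T.edges.filter (fun e => v ∈ e)).card

/-- The thickening function
`Φ_T(x) = ∏_edges ψ(‖x − y_i‖) / ∏_vertices ψ(‖x − v_j‖)^(val(v_j)−1)`,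
where `y_i` is the point of the edge `E_i` closest to `x` (so
`ψ(‖x − y_i‖) = ψ(infDist x E_i)` for monotone `ψ`). (At a vertex the
denominator vanishes and the convention `0/0 = 0` gives `Φ_T = 0` there.) -/
noncomputable def Phi (ψ : ℝ → ℝ) (x : EuclideanSpace ℝ (Fin n)) : ℝ :=
  (∏ e ∈ T.edges, ψ (infDist x (T.segOf e))) /
    (∏ v : T.V, ψ (dist x (T.pos v)) ^ ((T.deg v : ℤ) - 1))

end EmbTree

section Comb

variable {V : Type} [Fintype V] [DecidableEq V]

lemma card_filter_mem_eq_two (e : Sym2 V) (he : ¬ e.IsDiag) :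
    (Finset.univ.filter (fun v => v ∈ e)).card = 2 := by
  induction e using Sym2.ind with
  | _ a b =>
    have hab : a ≠ b := by simpa using he
    have h : Finset.univ.filter (fun v => v ∈ s(a, b)) = {a, b} := by
      ext v; simp [Sym2.mem_iff]
    rw [h, Finset.card_insert_of_notMem (by simp [hab]), Finset.card_singleton]

lemma handshake (edges : Finset (Sym2 V)) (nodiag : ∀ e ∈ edges, ¬ e.IsDiag) :
    ∑ v : V, (edges.filter (fun e => v ∈ e)).card = 2 * edges.card := by
  have h1 : ∀ v : V, (edges.filter (fun e => v ∈ e)).card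
      = ∑ e ∈ edges, if v ∈ e then 1 else 0 := by
    intro v; rw [Finset.card_filter]
  simp_rw [h1]
  rw [Finset.sum_comm]
  have h2 : ∀ e ∈ edges, (∑ v : V, if v ∈ e then 1 else 0) = 2 := by
    intro e he
    rw [← Finset.card_filter]
    exact card_filter_mem_eq_two e (nodiag e he)
  rw [Finset.sum_congr rfl h2, Finset.sum_const, smul_eq_mul, mul_comm]

lemma tree_parent (edges : Finset (Sym2 V))
    (nodiag : ∀ e ∈ edges, ¬ e.IsDiag)
    (conn : ∀ u v : V, Relation.ReflTransGen (fun a b => s(a, b) ∈ edges) u v)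
    (treecard : edges.card + 1 = Fintype.card V)
    (E₀ : Sym2 V) (hE₀ : E₀ ∈ edges) :
    ∃ (f : Sym2 V → V) (rank : Sym2 V → ℕ),
      (∀ e, f e ∈ e) ∧
      (∀ v : V, ((edges.erase E₀).filter (fun e => f e = v)).card + 1
          = (edges.filter (fun e => v ∈ e)).card) ∧
      (∀ e ∈ edges.erase E₀, ∃ e' ∈ edges, f e ∈ e' ∧
          (e' = E₀ ∨ rank e' < rank e)) := by
  classical
  induction E₀ using Sym2.ind with
  | _ a₀ b₀ =>
  set G : SimpleGraph V := SimpleGraph.fromEdgeSet ↑edges with hG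
  have hadj_of_mem : ∀ {a b : V}, s(a, b) ∈ edges → G.Adj a b := by
    intro a b h
    rw [hG, SimpleGraph.fromEdgeSet_adj]
    refine ⟨by exact_mod_cast h, ?_⟩
    intro hab
    exact nodiag _ h (by simp [hab])
  have hconn : G.Connected := by
    have hpos : 0 < Fintype.card V := by omega
    rw [SimpleGraph.connected_iff]
    refine ⟨fun u v => ?_, Fintype.card_pos_iff.mp hpos⟩
    rw [SimpleGraph.reachable_iff_reflTransGen]
    exact Relation.ReflTransGen.mono (fun a b h => hadj_of_mem h) u v (conn u v)
  set dep : V → ℕ := fun v => G.dist a₀ v with hdep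
  set idx : V → ℕ := fun v => (Fintype.equivFin V v : ℕ) with hidx
  set key : V → ℕ := fun v => dep v * Fintype.card V + idx v with hkey
  have hidxlt : ∀ v, idx v < Fintype.card V := fun v => (Fintype.equivFin V v).isLt
  have key_lt : ∀ {a b : V}, dep a < dep b → key a < key b := by
    intro a b h
    have : dep a * Fintype.card V + idx a < (dep a + 1) * Fintype.card V := by
      rw [add_mul, one_mul]; exact Nat.add_lt_add_left (hidxlt a) _
    calc key a < (dep a + 1) * Fintype.card V := this
      _ ≤ dep b * Fintype.card V := Nat.mul_le_mul_right _ h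
      _ ≤ key b := Nat.le_add_right _ _
  have key_inj : ∀ {a b : V}, key a = key b → a = b := by
    intro a b h
    rcases lt_trichotomy (dep a) (dep b) with hd | hd | hd
    · exact absurd h (Nat.ne_of_lt (key_lt hd))
    · have : idx a = idx b := by
        rw [hkey] at h; simp only [hd] at h; omega
      exact (Fintype.equivFin V).injective (Fin.val_injective this)
    · exact absurd h.symm (Nat.ne_of_lt (key_lt hd))
  set f : Sym2 V → V := Sym2.lift ⟨fun a b => if key a ≤ key b then a else b, by
    intro a b
    rcases le_or_gt (key a) (key b) with h | h
    · rcases le_or_gt (key b) (key a) with h' | h'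
      · simp [h, h', key_inj (le_antisymm h h')]
      · simp [h, not_le.mpr h']
    · simp [not_le.mpr h, h.le]⟩ with hf
  have hfmem : ∀ e : Sym2 V, f e ∈ e := by
    intro e
    induction e using Sym2.ind with
    | _ a b =>
      rw [hf, Sym2.lift_mk]
      dsimp only
      split_ifs <;> simp
  have hfmk : ∀ a b : V, dep a < dep b → f s(a, b) = a := by
    intro a b h
    rw [hf, Sym2.lift_mk]
    exact if_pos (key_lt h).le
  have parent : ∀ v : V, v ≠ a₀ → ∃ u : V, s(u, v) ∈ edges ∧ dep u + 1 = dep v := by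
    intro v hv
    obtain ⟨p, hp⟩ := hconn.exists_walk_length_eq_dist a₀ v
    obtain ⟨u, hadj, q, hq⟩ := SimpleGraph.Walk.exists_eq_cons_of_ne hv p.reverse
    have hlen : q.length + 1 = dep v := by
      have h1 := congrArg SimpleGraph.Walk.length hq
      rw [SimpleGraph.Walk.length_reverse, SimpleGraph.Walk.length_cons] at h1
      show q.length + 1 = G.dist a₀ v
      omega
    have h1 : dep u ≤ q.length := by
      have h2 := G.dist_le q.reverse
      rwa [SimpleGraph.Walk.length_reverse] at h2
    have h2 : dep v ≤ dep u + 1 := by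
      have h3 := hconn.dist_triangle (u := a₀) (v := u) (w := v)
      have h4 : G.dist u v = 1 := SimpleGraph.dist_eq_one_iff_adj.mpr hadj.symm
      show G.dist a₀ v ≤ G.dist a₀ u + 1
      omega
    have hedge : s(u, v) ∈ edges := by
      have := hadj.symm
      rw [hG, SimpleGraph.fromEdgeSet_adj] at this
      exact_mod_cast this.1
    exact ⟨u, hedge, by omega⟩
  -- fiber counting
  set S := edges.erase s(a₀, b₀) with hS
  have hfib_le : ∀ v : V, (S.filter (fun e => f e = v)).card + 1
      ≤ (edges.filter (fun e => v ∈ e)).card := by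
    intro v
    by_cases hv : v = a₀
    · subst hv
      have hsub : insert s(v, b₀) (S.filter (fun e => f e = v))
          ⊆ edges.filter (fun e => v ∈ e) := by
        intro e he
        rcases Finset.mem_insert.mp he with rfl | he'
        · exact Finset.mem_filter.mpr ⟨hE₀, Sym2.mem_mk_left _ _⟩
        · have h1 := Finset.mem_filter.mp he'
          exact Finset.mem_filter.mpr ⟨Finset.mem_of_mem_erase h1.1,
            h1.2 ▸ hfmem e⟩
      have hnot : s(v, b₀) ∉ S.filter (fun e => f e = v) := by
        intro h
        exact (Finset.mem_erase.mp (Finset.mem_filter.mp h).1).1 rfl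
      have := Finset.card_le_card hsub
      rwa [Finset.card_insert_of_notMem hnot] at this
    · obtain ⟨u, hedge, hdu⟩ := parent v hv
      have hfu : f s(u, v) = u := hfmk u v (by omega)
      have hsub : insert s(u, v) (S.filter (fun e => f e = v))
          ⊆ edges.filter (fun e => v ∈ e) := by
        intro e he
        rcases Finset.mem_insert.mp he with rfl | he'
        · exact Finset.mem_filter.mpr ⟨hedge, Sym2.mem_mk_right _ _⟩
        · have h1 := Finset.mem_filter.mp he'
          exact Finset.mem_filter.mpr ⟨Finset.mem_of_mem_erase h1.1,
            h1.2 ▸ hfmem e⟩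
      have hnot : s(u, v) ∉ S.filter (fun e => f e = v) := by
        intro h
        have h1 := (Finset.mem_filter.mp h).2
        rw [hfu] at h1
        have : u ≠ v := by
          intro h2; rw [h2] at hdu; omega
        exact this h1
      have := Finset.card_le_card hsub
      rwa [Finset.card_insert_of_notMem hnot] at this
  have hsum1 : ∑ v : V, (S.filter (fun e => f e = v)).card = S.card :=
    (Finset.card_eq_sum_card_fiberwise (fun e _ => Finset.mem_univ (f e))).symm
  have hScard : S.card + 1 = edges.card := by
    rw [hS, Finset.card_erase_of_mem hE₀]
    have : 0 < edges.card := Finset.card_pos.mpr ⟨_, hE₀⟩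
    omega
  have hhs := handshake edges nodiag
  have hfib : ∀ v : V, (S.filter (fun e => f e = v)).card + 1
      = (edges.filter (fun e => v ∈ e)).card := by
    by_contra hcon
    push_neg at hcon
    obtain ⟨v, hv⟩ := hcon
    have hlt : (S.filter (fun e => f e = v)).card + 1
        < (edges.filter (fun e => v ∈ e)).card :=
      lt_of_le_of_ne (hfib_le v) hv
    have hstrict : ∑ w : V, ((S.filter (fun e => f e = w)).card + 1)
        < ∑ w : V, (edges.filter (fun e => w ∈ e)).card :=
      Finset.sum_lt_sum (fun i _ => hfib_le i) ⟨v, Finset.mem_univ v, hlt⟩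
    rw [Finset.sum_add_distrib, hsum1, Finset.sum_const, Finset.card_univ,
      smul_eq_mul, mul_one, hhs] at hstrict
    omega
  refine ⟨f, fun e => dep (f e), hfmem, hfib, ?_⟩
  intro e he
  by_cases hv : f e = a₀
  · exact ⟨s(a₀, b₀), hE₀, hv ▸ Sym2.mem_mk_left _ _, Or.inl rfl⟩
  · obtain ⟨u, hedge, hdu⟩ := parent (f e) hv
    refine ⟨s(u, f e), hedge, Sym2.mem_mk_right _ _, ?_⟩
    by_cases hE : s(u, f e) = s(a₀, b₀)
    · exact Or.inl hE
    · right
      have h9 : dep (f s(u, f e)) < dep (f e) := by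
        rw [hfmk u (f e) (by omega)]; omega
      exact h9

end Comb

section Geom

variable {n : ℕ} (T : EmbTree n)

lemma segOf_mk (a b : T.V) :
    T.segOf s(a, b) = segment ℝ (T.pos a) (T.pos b) := rfl

lemma pos_mem_segOf {e : Sym2 T.V} {v : T.V} (hv : v ∈ e) :
    T.pos v ∈ T.segOf e := by
  induction e using Sym2.ind with
  | _ a b =>
    rw [Sym2.mem_iff] at hv
    rw [segOf_mk]
    rcases hv with rfl | rfl
    · exact left_mem_segment ℝ _ _
    · exact right_mem_segment ℝ _ _

lemma segOf_nonempty (e : Sym2 T.V) : (T.segOf e).Nonempty := by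
  induction e using Sym2.ind with
  | _ a b => exact ⟨T.pos a, segOf_mk T a b ▸ left_mem_segment ℝ _ _⟩

lemma segOf_closed (e : Sym2 T.V) : IsClosed (T.segOf e) := by
  induction e using Sym2.ind with
  | _ a b =>
    rw [segOf_mk, segment_eq_image]
    exact (isCompact_Icc.image (by fun_prop)).isClosed

lemma segOf_subset_carrier {e : Sym2 T.V} (he : e ∈ T.edges) :
    T.segOf e ⊆ T.carrier :=
  Set.subset_iUnion₂ (s := fun e _ => T.segOf e) e he

lemma mem_carrier_iff (z : EuclideanSpace ℝ (Fin n)) :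
    z ∈ T.carrier ↔ ∃ e ∈ T.edges, z ∈ T.segOf e := by
  simp [EmbTree.carrier]

end Geom

open Metric in
/-- basic properties of the thickening function of an embedded
tree: `0 ≤ Φ_T ≤ 1`, `Φ_T(x) = 0` iff `x ∈ T`, and `Φ_T(x) = 1` iff
`dist(x, T) ≥ 3/2`. -/
theorem Phi_bounds (n : ℕ) (T : EmbTree n) (hedge : T.edges.Nonempty)
    (ψ : ℝ → ℝ) (hcont : Continuous ψ)
    (hrange : ∀ t, 0 ≤ t → ψ t ∈ Set.Icc (0 : ℝ) 1)
    (hzero : ∀ t, 0 ≤ t → (ψ t = 0 ↔ t = 0))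
    (hone : ∀ t, 0 ≤ t → (ψ t = 1 ↔ 3/2 ≤ t))
    (hmono : StrictMonoOn ψ (Set.Icc 0 (3/2))) :
    ∀ x : EuclideanSpace ℝ (Fin n),
      (0 ≤ T.Phi ψ x ∧ T.Phi ψ x ≤ 1) ∧
      (T.Phi ψ x = 0 ↔ x ∈ T.carrier) ∧
      (T.Phi ψ x = 1 ↔ 3/2 ≤ infDist x T.carrier) := by
  have hψ0 : ∀ t : ℝ, 0 ≤ t → 0 ≤ ψ t := fun t ht => (hrange t ht).1
  have hψ1 : ∀ t : ℝ, 0 ≤ t → ψ t ≤ 1 := fun t ht => (hrange t ht).2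
  have hψmono : ∀ s t : ℝ, 0 ≤ s → s ≤ t → ψ s ≤ ψ t := by
    intro s t hs hst
    rcases le_or_gt t (3/2) with h | h
    · exact hmono.monotoneOn ⟨hs, hst.trans h⟩ ⟨hs.trans hst, h⟩ hst
    · rw [(hone t (hs.trans hst)).mpr h.le]; exact hψ1 s hs
  have hψeq : ∀ s t : ℝ, 0 ≤ s → s ≤ t → s < 3/2 → ψ s = ψ t → s = t := by
    intro s t hs hst hs32 heq
    by_contra hne
    have hlt : s < t := lt_of_le_of_ne hst hne
    rcases le_or_gt t (3/2) with h | h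
    · exact absurd heq (ne_of_lt (hmono ⟨hs, hs32.le⟩ ⟨hs.trans hst, h⟩ hlt))
    · have h1 : ψ t = 1 := (hone t (hs.trans hst)).mpr h.le
      have h2 := (hone s hs).mp (heq.trans h1)
      linarith
  intro x
  obtain ⟨E₀, hE₀⟩ := hedge
  obtain ⟨f, rank, hfmem, hfib, hchain⟩ :=
    tree_parent T.edges T.nodiag T.conn T.treecard E₀ hE₀
  have hdeg_pos : ∀ v : T.V, 0 < T.deg v := by
    intro v
    have := hfib v
    show 0 < (T.edges.filter (fun e => v ∈ e)).card
    omega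
  have hcar_ne : T.carrier.Nonempty :=
    ⟨T.pos (f E₀), segOf_subset_carrier T hE₀ (pos_mem_segOf T (hfmem E₀))⟩
  -- notation
  set S := T.edges.erase E₀ with hSdef
  have hdEn : ∀ e : Sym2 T.V, 0 ≤ ψ (infDist x (T.segOf e)) :=
    fun e => hψ0 _ infDist_nonneg
  have hdvn : ∀ v : T.V, 0 ≤ ψ (dist x (T.pos v)) := fun v => hψ0 _ dist_nonneg
  -- denominator rewriting
  have step : ∀ v : T.V, ψ (dist x (T.pos v)) ^ (T.deg v - 1)
      = ∏ e ∈ S.filter (fun e => f e = v), ψ (dist x (T.pos (f e))) := by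
    intro v
    rw [Finset.prod_congr rfl
        (fun e he => by rw [(Finset.mem_filter.mp he).2] :
          ∀ e ∈ S.filter (fun e => f e = v),
            ψ (dist x (T.pos (f e))) = ψ (dist x (T.pos v))),
      Finset.prod_const]
    congr 1
    have h1 := hfib v
    have h2 : T.deg v = (T.edges.filter (fun e => v ∈ e)).card := rfl
    omega
  have hDzQ : (∏ v : T.V, ψ (dist x (T.pos v)) ^ ((T.deg v : ℤ) - 1))
      = ∏ e ∈ S, ψ (dist x (T.pos (f e))) := by
    rw [← Finset.prod_fiberwise_of_maps_to (t := Finset.univ)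
      (fun e (_ : e ∈ S) => Finset.mem_univ (f e))
      (fun e => ψ (dist x (T.pos (f e))))]
    refine Finset.prod_congr rfl fun v _ => ?_
    rw [← step v]
    have h1 : ((T.deg v : ℤ) - 1) = ((T.deg v - 1 : ℕ) : ℤ) := by
      have := hdeg_pos v; omega
    rw [h1, zpow_natCast]
  have hphi : T.Phi ψ x = (∏ e ∈ T.edges, ψ (infDist x (T.segOf e)))
      / (∏ e ∈ S, ψ (dist x (T.pos (f e)))) := by
    rw [EmbTree.Phi, hDzQ]
  have hNsplit : ψ (infDist x (T.segOf E₀))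
        * ∏ e ∈ S, ψ (infDist x (T.segOf e))
      = ∏ e ∈ T.edges, ψ (infDist x (T.segOf e)) := by
    rw [hSdef]
    exact Finset.mul_prod_erase T.edges (fun e => ψ (infDist x (T.segOf e))) hE₀
  have hper : ∀ e ∈ S, ψ (infDist x (T.segOf e)) ≤ ψ (dist x (T.pos (f e))) :=
    fun e _ => hψmono _ _ infDist_nonneg
      (infDist_le_dist_of_mem (pos_mem_segOf T (hfmem e)))
  have hPle : (∏ e ∈ S, ψ (infDist x (T.segOf e)))
      ≤ ∏ e ∈ S, ψ (dist x (T.pos (f e))) :=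
    Finset.prod_le_prod (fun e _ => hdEn e) hper
  have hNQ : (∏ e ∈ T.edges, ψ (infDist x (T.segOf e)))
      ≤ ∏ e ∈ S, ψ (dist x (T.pos (f e))) := by
    rw [← hNsplit]
    calc ψ (infDist x (T.segOf E₀)) * ∏ e ∈ S, ψ (infDist x (T.segOf e))
        ≤ 1 * ∏ e ∈ S, ψ (dist x (T.pos (f e))) :=
          mul_le_mul (hψ1 _ infDist_nonneg) hPle
            (Finset.prod_nonneg fun e _ => hdEn e) zero_le_one
      _ = _ := one_mul _
  have hQnn : 0 ≤ ∏ e ∈ S, ψ (dist x (T.pos (f e))) :=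
    Finset.prod_nonneg fun e _ => hdvn (f e)
  refine ⟨⟨?_, ?_⟩, ⟨?_, ?_⟩, ⟨?_, ?_⟩⟩
  · -- 0 ≤ Φ
    rw [hphi]
    exact div_nonneg (Finset.prod_nonneg fun e _ => hdEn e) hQnn
  · -- Φ ≤ 1
    rcases eq_or_lt_of_le hQnn with h0 | hpos
    · rw [hphi, ← h0, div_zero]; exact zero_le_one
    · rw [hphi, div_le_one hpos]; exact hNQ
  · -- Φ = 0 → x ∈ carrier
    intro h0
    rw [hphi, div_eq_zero_iff] at h0
    rcases h0 with h0 | h0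
    · obtain ⟨e, he, hze⟩ := Finset.prod_eq_zero_iff.mp h0
      have h1 : infDist x (T.segOf e) = 0 := (hzero _ infDist_nonneg).mp hze
      have hx : x ∈ T.segOf e :=
        ((segOf_closed T e).mem_iff_infDist_zero (segOf_nonempty T e)).mpr h1
      exact segOf_subset_carrier T he hx
    · obtain ⟨e, he, hze⟩ := Finset.prod_eq_zero_iff.mp h0
      have h1 : dist x (T.pos (f e)) = 0 := (hzero _ dist_nonneg).mp hze
      have hx : x = T.pos (f e) := by rwa [dist_eq_zero] at h1
      exact segOf_subset_carrier T (Finset.mem_of_mem_erase he)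
        (hx ▸ pos_mem_segOf T (hfmem e))
  · -- x ∈ carrier → Φ = 0
    intro hx
    obtain ⟨e, he, hxe⟩ := (mem_carrier_iff T x).mp hx
    have h1 : ψ (infDist x (T.segOf e)) = 0 := by
      rw [infDist_zero_of_mem hxe]
      exact (hzero 0 le_rfl).mpr rfl
    rw [hphi, Finset.prod_eq_zero he h1, zero_div]
  · -- Φ = 1 → far
    intro hΦ
    have hQne : (∏ e ∈ S, ψ (dist x (T.pos (f e)))) ≠ 0 := by
      intro h
      rw [hphi, h, div_zero] at hΦ
      exact zero_ne_one hΦ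
    have hQpos : 0 < ∏ e ∈ S, ψ (dist x (T.pos (f e))) :=
      lt_of_le_of_ne hQnn (Ne.symm hQne)
    have hN : (∏ e ∈ T.edges, ψ (infDist x (T.segOf e)))
        = ∏ e ∈ S, ψ (dist x (T.pos (f e))) := by
      rw [hphi, div_eq_one_iff_eq hQne] at hΦ
      exact hΦ
    have hNne : (∏ e ∈ T.edges, ψ (infDist x (T.segOf e))) ≠ 0 := hN ▸ hQne
    have hfacpos : ∀ e ∈ T.edges, 0 < ψ (infDist x (T.segOf e)) := by
      intro e he
      exact lt_of_le_of_ne (hdEn e)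
        (Ne.symm (Finset.prod_ne_zero_iff.mp hNne e he))
    have hPpos : 0 < ∏ e ∈ S, ψ (infDist x (T.segOf e)) :=
      Finset.prod_pos fun e he => hfacpos e (Finset.mem_of_mem_erase he)
    have hpoint : ∀ e ∈ S, ψ (infDist x (T.segOf e)) = ψ (dist x (T.pos (f e))) := by
      by_contra hcon
      push_neg at hcon
      obtain ⟨e, he, hne⟩ := hcon
      have hstrict : (∏ e ∈ S, ψ (infDist x (T.segOf e)))
          < ∏ e ∈ S, ψ (dist x (T.pos (f e))) :=
        Finset.prod_lt_prod
          (fun i hi => hfacpos i (Finset.mem_of_mem_erase hi)) hper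
          ⟨e, he, lt_of_le_of_ne (hper e he) hne⟩
      have hle2 : (∏ e ∈ T.edges, ψ (infDist x (T.segOf e)))
          ≤ ∏ e ∈ S, ψ (infDist x (T.segOf e)) := by
        rw [← hNsplit]
        exact mul_le_of_le_one_left hPpos.le (hψ1 _ infDist_nonneg)
      rw [hN] at hle2
      exact absurd (hle2.trans_lt hstrict) (lt_irrefl _)
    have hPQ : (∏ e ∈ S, ψ (infDist x (T.segOf e)))
        = ∏ e ∈ S, ψ (dist x (T.pos (f e))) :=
      Finset.prod_congr rfl hpoint
    have hE0one : ψ (infDist x (T.segOf E₀)) = 1 := by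
      have h1 : ψ (infDist x (T.segOf E₀))
          * (∏ e ∈ S, ψ (infDist x (T.segOf e)))
          = ∏ e ∈ S, ψ (infDist x (T.segOf e)) := by
        rw [hNsplit, hN, ← hPQ]
      exact (mul_left_eq_self₀.mp h1).resolve_right (ne_of_gt hPpos)
    have hE0dist : 3/2 ≤ infDist x (T.segOf E₀) :=
      (hone _ infDist_nonneg).mp hE0one
    have hall : ∀ k : ℕ, ∀ e ∈ S, rank e = k → 3/2 ≤ infDist x (T.segOf e) := by
      intro k
      induction k using Nat.strong_induction_on with
      | _ k IH =>
        intro e he hrk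
        by_contra hlt
        push_neg at hlt
        have heq := hpoint e he
        have hle : infDist x (T.segOf e) ≤ dist x (T.pos (f e)) :=
          infDist_le_dist_of_mem (pos_mem_segOf T (hfmem e))
        have heq2 : infDist x (T.segOf e) = dist x (T.pos (f e)) :=
          hψeq _ _ infDist_nonneg hle hlt heq
        obtain ⟨e', he', hmem', hor⟩ := hchain e he
        have hde' : infDist x (T.segOf e') ≤ dist x (T.pos (f e)) :=
          infDist_le_dist_of_mem (pos_mem_segOf T hmem')
        rcases eq_or_ne e' E₀ with rfl | hne'
        · linarith
        · have hrank : rank e' < rank e := hor.resolve_left hne'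
          have he'S : e' ∈ S := Finset.mem_erase.mpr ⟨hne', he'⟩
          have := IH (rank e') (hrk ▸ hrank) e' he'S rfl
          linarith
    have hallE : ∀ e ∈ T.edges, 3/2 ≤ infDist x (T.segOf e) := by
      intro e he
      rcases eq_or_ne e E₀ with rfl | h
      · exact hE0dist
      · exact hall (rank e) e (Finset.mem_erase.mpr ⟨h, he⟩) rfl
    by_contra hfar
    push_neg at hfar
    obtain ⟨y, hy, hdy⟩ := (infDist_lt_iff hcar_ne).mp hfar
    obtain ⟨e, he, hye⟩ := (mem_carrier_iff T y).mp hy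
    have h1 : infDist x (T.segOf e) < 3/2 :=
      lt_of_le_of_lt (infDist_le_dist_of_mem hye) hdy
    exact absurd h1 (not_lt.mpr (hallE e he))
  · -- far → Φ = 1
    intro hfar
    have hN1 : (∏ e ∈ T.edges, ψ (infDist x (T.segOf e))) = 1 :=
      Finset.prod_eq_one fun e he =>
        (hone _ infDist_nonneg).mpr (hfar.trans
          (infDist_le_infDist_of_subset (segOf_subset_carrier T he)
            (segOf_nonempty T e)))
    have hD1 : (∏ v : T.V, ψ (dist x (T.pos v)) ^ ((T.deg v : ℤ) - 1)) = 1 :=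
      Finset.prod_eq_one fun v _ => by
        have hvmem : T.pos v ∈ T.carrier := by
          have h1 := hdeg_pos v
          obtain ⟨e, he⟩ :=
            (Finset.card_pos (s := T.edges.filter (fun e => v ∈ e))).mp h1
          have h2 := Finset.mem_filter.mp he
          exact segOf_subset_carrier T h2.1 (pos_mem_segOf T h2.2)
        rw [(hone _ dist_nonneg).mpr (hfar.trans (infDist_le_dist_of_mem hvmem))]
        exact one_zpow _
    rw [EmbTree.Phi, hN1, hD1, div_one]
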